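/- Let n ≥ 2, let φ : [0,∞) → [0,∞) be an increasing, convex, non-constant function, and let μ be the measure on ℝⁿ with density x ↦ e^{-φ(|x|)}. Let R > 0 and let P = {x ∈ ℝⁿ : |⟨x, e_n⟩| ≤ R} be the plank of width 2R. Then for every t > 0, μ((tP)^c) ≥ (2|𝕊^{n-2}|/(n-1)) · ∫_{tR}^∞ (z - tR)^{n-1} e^{-φ(z)} dz, where |𝕊^{n-2}| denotes the (n-2)-dimensional surface measure of the unit sphere in ℝ^{n-1}. -/

import Mathlib

open MeasureTheory Filter Set Metric Pointwise RealInnerProductSpace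
open scoped ENNReal

local notation "dim" => Module.finrank ℝ

theorem my_lintegral_fun_norm_addHaar {E : Type*} [NormedAddCommGroup E] [NormedSpace ℝ E]
    [MeasurableSpace E] [BorelSpace E] [Nontrivial E] [FiniteDimensional ℝ E]
    (μ : Measure E) [μ.IsAddHaarMeasure] (f : ℝ → ℝ≥0∞) (hf : Measurable f) :
    ∫⁻ x, f ‖x‖ ∂μ
      = μ.toSphere univ * ∫⁻ y in Ioi (0 : ℝ), ENNReal.ofReal (y ^ (dim E - 1)) * f y := by
  have h0 : ∫⁻ x, f ‖x‖ ∂μ = ∫⁻ x : ({(0)}ᶜ : Set E), f ‖x.1‖ ∂(μ.comap (↑)) := by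
    rw [lintegral_subtype_comap (measurableSet_singleton _).compl fun x => f ‖x‖,
      MeasureTheory.restrict_compl_singleton]
  have h1 : ∫⁻ x : ({(0)}ᶜ : Set E), f ‖x.1‖ ∂(μ.comap (↑))
      = ∫⁻ p : sphere (0 : E) 1 × Ioi (0 : ℝ), f p.2
          ∂μ.toSphere.prod (.volumeIoiPow (dim E - 1)) := by
    rw [← μ.measurePreserving_homeomorphUnitSphereProd.lintegral_comp_emb
      (Homeomorph.measurableEmbedding _) (fun p => f p.2)]
    exact lintegral_congr fun x => by simp
  have hm : Measurable fun p : sphere (0 : E) 1 × Ioi (0 : ℝ) => f p.2 :=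
    hf.comp (measurable_subtype_coe.comp measurable_snd)
  have h2 : ∫⁻ p : sphere (0 : E) 1 × Ioi (0 : ℝ), f p.2
        ∂μ.toSphere.prod (.volumeIoiPow (dim E - 1))
      = ∫⁻ x : sphere (0 : E) 1, ∫⁻ r : Ioi (0 : ℝ), f r
          ∂(Measure.volumeIoiPow (dim E - 1)) ∂μ.toSphere :=
    lintegral_prod _ hm.aemeasurable
  have h3 : ∫⁻ r : Ioi (0 : ℝ), f r ∂(Measure.volumeIoiPow (dim E - 1))
      = ∫⁻ y in Ioi (0 : ℝ), ENNReal.ofReal (y ^ (dim E - 1)) * f y := by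
    rw [Measure.volumeIoiPow, lintegral_withDensity_eq_lintegral_mul _
      ((measurable_subtype_coe.pow_const _).ennreal_ofReal)
      (show Measurable fun r : Ioi (0 : ℝ) => f ↑r from hf.comp measurable_subtype_coe)]
    exact lintegral_subtype_comap measurableSet_Ioi fun y => ENNReal.ofReal (y ^ (dim E - 1)) * f y
  rw [h0, h1, h2, h3, lintegral_const, mul_comm]

theorem my_norm_split (m : ℕ) (x : EuclideanSpace ℝ (Fin (m + 1)))
    (y : EuclideanSpace ℝ (Fin m)) (hy : ∀ j, y j = x (Fin.castSucc j)) :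
    ‖x‖ ≤ |x (Fin.last m)| + ‖y‖ := by
  have hx : ‖x‖ = Real.sqrt ((∑ j : Fin m, ‖y j‖ ^ 2) + ‖x (Fin.last m)‖ ^ 2) := by
    rw [EuclideanSpace.norm_eq x, Fin.sum_univ_castSucc]
    simp only [hy]
  have hy' : ‖y‖ = Real.sqrt (∑ j : Fin m, ‖y j‖ ^ 2) := EuclideanSpace.norm_eq y
  rw [hx, hy']
  have hA : (0:ℝ) ≤ ∑ j : Fin m, ‖y j‖ ^ 2 := by positivity
  have hb : |x (Fin.last m)| = ‖x (Fin.last m)‖ := (Real.norm_eq_abs _).symm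
  have hnn : 0 ≤ Real.sqrt (∑ j : Fin m, ‖y j‖ ^ 2) + |x (Fin.last m)| := by positivity
  calc Real.sqrt ((∑ j : Fin m, ‖y j‖ ^ 2) + ‖x (Fin.last m)‖ ^ 2)
      ≤ Real.sqrt ((Real.sqrt (∑ j : Fin m, ‖y j‖ ^ 2) + |x (Fin.last m)|) ^ 2) := by
        apply Real.sqrt_le_sqrt
        have h1 := Real.sq_sqrt hA
        have h2 := Real.sqrt_nonneg (∑ j : Fin m, ‖y j‖ ^ 2)
        have h3 := abs_nonneg (x (Fin.last m))
        have h4 : ‖x (Fin.last m)‖ ^ 2 = |x (Fin.last m)| ^ 2 := by rw [hb]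
        nlinarith
    _ = Real.sqrt (∑ j : Fin m, ‖y j‖ ^ 2) + |x (Fin.last m)| := Real.sqrt_sq hnn
    _ = |x (Fin.last m)| + Real.sqrt (∑ j : Fin m, ‖y j‖ ^ 2) := add_comm _ _

theorem my_core (m : ℕ) (hm1 : 1 ≤ m) (ψ : ℝ → ℝ) (hψmono : Monotone ψ)
    (c : ℝ) (hc0 : 0 < c) :
    2 * ((volume : Measure (EuclideanSpace ℝ (Fin m))).toSphere univ)
        * ((∫⁻ z in Ioi c, ENNReal.ofReal ((z - c) ^ m * Real.exp (-ψ z)))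
            / ENNReal.ofReal (m : ℝ))
      ≤ ∫⁻ x in {x : EuclideanSpace ℝ (Fin (m + 1)) | c < |x (Fin.last m)|},
          ENNReal.ofReal (Real.exp (-ψ ‖x‖)) := by
  haveI : Nontrivial (EuclideanSpace ℝ (Fin m)) := by
    have h0m : (0:ℕ) < m := hm1
    refine ⟨⟨EuclideanSpace.single ⟨0, h0m⟩ 1, 0, fun h => ?_⟩⟩
    have := congrArg (fun v : EuclideanSpace ℝ (Fin m) => v ⟨0, h0m⟩) h
    simpa using this
  have mpos : (0:ℝ) < (m:ℝ) := by exact_mod_cast hm1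
  set T : ℝ≥0∞ := (volume : Measure (EuclideanSpace ℝ (Fin m))).toSphere univ with hT
  set d : ℝ≥0∞ := ENNReal.ofReal (m : ℝ) with hd
  have hdinv : d⁻¹ ≠ ⊤ := ENNReal.inv_ne_top.2 (ENNReal.ofReal_pos.2 mpos).ne'
  set J : ℝ≥0∞ := ∫⁻ z in Ioi c, ENNReal.ofReal ((z - c) ^ m * Real.exp (-ψ z)) with hJ
  have hψmeas : Measurable ψ := hψmono.measurable
  set Q : ℝ → ℝ≥0∞ := fun s => ENNReal.ofReal (Real.exp (-ψ s)) with hQ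
  have hQmeas : Measurable Q := (Real.measurable_exp.comp hψmeas.neg).ennreal_ofReal
  set K : ℝ → ℝ≥0∞ := fun b => ∫⁻ r in Ioi (0:ℝ), ENNReal.ofReal (r ^ (m - 1)) * Q (b + r)
    with hK
  have hKmeas : Measurable K := by
    apply Measurable.lintegral_prod_right'
      (f := fun p : ℝ × ℝ => ENNReal.ofReal (p.2 ^ (m - 1)) * Q (p.1 + p.2))
    exact (measurable_snd.pow_const _).ennreal_ofReal.mul
      (hQmeas.comp (measurable_fst.add measurable_snd))
  set W : ℝ → ℝ → ℝ≥0∞ := fun a z => ENNReal.ofReal ((z - a) ^ (m - 1)) * Q z with hW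
  set Aset : Set (EuclideanSpace ℝ (Fin (m + 1))) := {x | c < |x (Fin.last m)|} with hAset
  have hxm : Measurable fun x : EuclideanSpace ℝ (Fin (m+1)) => x (Fin.last m) :=
    (measurable_pi_apply (Fin.last m)).comp (MeasurableEquiv.toLp 2 (Fin (m+1) → ℝ)).symm.measurable
  have hAmeas : MeasurableSet Aset := measurableSet_lt measurable_const hxm.abs
  set H : ℝ × EuclideanSpace ℝ (Fin m) → ℝ≥0∞ :=
    fun p => if c < |p.1| then Q (|p.1| + ‖p.2‖) else 0 with hH
  have hHmeas : Measurable H := Measurable.ite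
    (measurableSet_lt measurable_const measurable_fst.abs)
    (hQmeas.comp (measurable_fst.abs.add measurable_snd.norm)) measurable_const
  set G : EuclideanSpace ℝ (Fin (m + 1)) → ℝ × EuclideanSpace ℝ (Fin m) :=
    fun x => Prod.map (id : ℝ → ℝ) (MeasurableEquiv.toLp 2 (Fin m → ℝ)).symm.symm
      ((MeasurableEquiv.piFinSuccAbove (fun _ : Fin (m+1) => ℝ) (Fin.last m))
        ((MeasurableEquiv.toLp 2 (Fin (m+1) → ℝ)).symm x)) with hG
  have hGmp : MeasurePreserving G volume
      ((volume : Measure ℝ).prod (volume : Measure (EuclideanSpace ℝ (Fin m)))) := by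
    have g1 := EuclideanSpace.volume_preserving_symm_measurableEquiv_toLp (Fin (m+1))
    have g2 := volume_preserving_piFinSuccAbove (fun _ : Fin (m+1) => ℝ) (Fin.last m)
    have g3 := (MeasurePreserving.id (volume : Measure ℝ)).prod
      (MeasurePreserving.symm _ (EuclideanSpace.volume_preserving_symm_measurableEquiv_toLp (Fin m)))
    exact (g3.comp g2).comp g1
  have hG1 : ∀ x, (G x).1 = x (Fin.last m) := fun x => rfl
  have hG2 : ∀ x j, (G x).2 j = x (Fin.castSucc j) := by
    intro x j
    show x ((Fin.last m).succAbove j) = x (Fin.castSucc j)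
    rw [Fin.succAbove_last]
  -- step e1
  have e1 : ∫⁻ x, H (G x) ≤ ∫⁻ x in Aset, Q ‖x‖ := by
    rw [← lintegral_indicator hAmeas]
    refine lintegral_mono fun x => ?_
    rw [Set.indicator_apply]
    have hmem : (x ∈ Aset) = (c < |x (Fin.last m)|) := rfl
    by_cases h : c < |x (Fin.last m)|
    · rw [if_pos (show x ∈ Aset from h)]
      have hHx : H (G x) = Q (|x (Fin.last m)| + ‖(G x).2‖) := by
        rw [hH]; simp only [hG1 x]; rw [if_pos h]
      rw [hHx, hQ]
      refine ENNReal.ofReal_le_ofReal (Real.exp_le_exp.2 (neg_le_neg ?_))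
      exact hψmono (my_norm_split m x (G x).2 (hG2 x))
    · rw [if_neg (show ¬ x ∈ Aset from h)]
      have hHx : H (G x) = 0 := by rw [hH]; simp only [hG1 x]; rw [if_neg h]
      rw [hHx]
  -- step e2
  have e2 : ∫⁻ x, H (G x) = ∫⁻ p, H p
      ∂((volume : Measure ℝ).prod (volume : Measure (EuclideanSpace ℝ (Fin m)))) :=
    hGmp.lintegral_comp hHmeas
  -- step e3
  have e3 : ∫⁻ p, H p
        ∂((volume : Measure ℝ).prod (volume : Measure (EuclideanSpace ℝ (Fin m))))
      = ∫⁻ a : ℝ, if c < |a| then T * K |a| else 0 := by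
    rw [lintegral_prod _ hHmeas.aemeasurable]
    refine lintegral_congr fun a => ?_
    by_cases h : c < |a|
    · simp only [hH, if_pos h]
      have hpolar := my_lintegral_fun_norm_addHaar
        (volume : Measure (EuclideanSpace ℝ (Fin m))) (fun r => Q (|a| + r))
        (hQmeas.comp (measurable_const.add measurable_id))
      rw [hpolar, finrank_euclideanSpace_fin]
    · simp only [hH, if_neg h, lintegral_zero]
  -- step e4
  have hsetsplit : {a : ℝ | c < |a|} = Iio (-c) ∪ Ioi c := by
    ext a
    simp only [mem_setOf_eq, mem_union, mem_Iio, mem_Ioi, lt_abs]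
    constructor
    · rintro (h | h)
      · right; exact h
      · left; linarith
    · rintro (h | h)
      · right; linarith
      · left; exact h
  have e4 : ∫⁻ a : ℝ, (if c < |a| then T * K |a| else 0)
      = ∫⁻ a in Iio (-c) ∪ Ioi c, T * K |a| := by
    rw [← lintegral_indicator (measurableSet_Iio.union measurableSet_Ioi)]
    refine lintegral_congr fun a => ?_
    rw [Set.indicator_apply]
    exact if_congr (Set.ext_iff.1 hsetsplit a) rfl rfl
  -- step e5/e6 : union split and symmetry
  have e5 : ∫⁻ a in Iio (-c) ∪ Ioi c, T * K |a|
      = (∫⁻ a in Iio (-c), T * K |a|) + ∫⁻ a in Ioi c, T * K |a| :=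
    lintegral_union measurableSet_Ioi (by
      rw [Set.disjoint_left]
      intro a ha hb
      simp only [mem_Iio, mem_Ioi] at ha hb
      linarith)
  have e6 : ∫⁻ a in Iio (-c), T * K |a| = ∫⁻ a in Ioi c, T * K |a| := by
    have hneg := (Measure.measurePreserving_neg (volume : Measure ℝ)).setLIntegral_comp_emb
      (MeasurableEquiv.neg ℝ).measurableEmbedding (fun a => T * K |a|) (Ioi c)
    have himg : (Neg.neg : ℝ → ℝ) '' (Ioi c) = Iio (-c) := by
      ext b
      simp only [mem_image, mem_Ioi, mem_Iio]
      constructor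
      · rintro ⟨a, ha, rfl⟩; linarith
      · intro h; exact ⟨-b, by linarith, by ring⟩
    rw [himg] at hneg
    rw [← hneg]
    exact lintegral_congr fun a => by rw [abs_neg]
  -- step e7 : |a| = a on Ioi c and pull out T
  have eabs : ∫⁻ a in Ioi c, T * K |a| = T * ∫⁻ a in Ioi c, K a := by
    rw [setLIntegral_congr_fun_ae measurableSet_Ioi
      (ae_of_all _ fun a (ha : c < a) => by rw [abs_of_pos (hc0.trans ha)])]
    exact lintegral_const_mul T hKmeas
  -- shift lemma
  have hKshift : ∀ b : ℝ, K b = ∫⁻ z in Ioi b, W b z := by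
    intro b
    have hsh := (measurePreserving_add_right (volume : Measure ℝ) b).setLIntegral_comp_emb
      (MeasurableEquiv.addRight b).measurableEmbedding (fun z => W b z) (Ioi (0:ℝ))
    have himg : (fun x => x + b) '' (Ioi (0:ℝ)) = Ioi b := by
      ext z
      simp only [mem_image, mem_Ioi]
      constructor
      · rintro ⟨a, ha, rfl⟩; linarith
      · intro h; exact ⟨z - b, by linarith, by ring⟩
    rw [himg] at hsh
    rw [← hsh, hK]
    refine setLIntegral_congr_fun_ae measurableSet_Ioi (ae_of_all _ fun r (hr : 0 < r) => ?_)
    rw [hW]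
    simp only [add_sub_cancel_right]
    rw [add_comm b r]
  -- step e8 : rewrite K as double integral with ite
  have e8 : ∫⁻ a in Ioi c, K a
      = ∫⁻ a in Ioi c, ∫⁻ z : ℝ, (if a < z then W a z else 0) := by
    refine lintegral_congr fun a => ?_
    rw [hKshift a, ← lintegral_indicator measurableSet_Ioi]
    exact lintegral_congr fun z => by rw [Set.indicator_apply]; rfl
  -- swap
  have hWu : Measurable (Function.uncurry fun a z => if a < z then W a z else 0) := by
    refine Measurable.ite (measurableSet_lt measurable_fst measurable_snd) ?_ measurable_const
    exact ((measurable_snd.sub measurable_fst).pow_const _).ennreal_ofReal.mul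
      (hQmeas.comp measurable_snd)
  have e9 : ∫⁻ a in Ioi c, ∫⁻ z : ℝ, (if a < z then W a z else 0)
      = ∫⁻ z : ℝ, ∫⁻ a in Ioi c, (if a < z then W a z else 0) :=
    lintegral_lintegral_swap hWu.aemeasurable
  -- inner set rewrite
  have e10 : ∀ z : ℝ, ∫⁻ a in Ioi c, (if a < z then W a z else 0)
      = ∫⁻ a in Ioo c z, W a z := by
    intro z
    have : (fun a => if a < z then W a z else 0) = (Iio z).indicator (fun a => W a z) := by
      funext a; rw [Set.indicator_apply]; rfl
    rw [this, lintegral_indicator measurableSet_Iio,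
      Measure.restrict_restrict measurableSet_Iio, Iio_inter_Ioi]
  -- compute inner integral
  have hcompute : ∀ z : ℝ, c < z →
      ∫⁻ a in Ioo c z, ENNReal.ofReal ((z - a) ^ (m - 1))
        = ENNReal.ofReal ((z - c) ^ m / m) := by
    intro z hz
    have hint : IntegrableOn (fun a => (z - a) ^ (m - 1)) (Ioo c z) := by
      exact (Continuous.integrableOn_Icc
        ((continuous_const.sub continuous_id).pow _)).mono_set Ioo_subset_Icc_self
    rw [← ofReal_integral_eq_lintegral_ofReal hint ?_]
    · congr 1
      have h1 : ∫ a in Ioo c z, (z - a) ^ (m - 1)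
          = ∫ a in Ioc c z, (z - a) ^ (m - 1) := by
        rw [Measure.restrict_congr_set Ioo_ae_eq_Ioc]
      have hcast : ((m - 1 : ℕ) : ℝ) + 1 = (m : ℝ) := by
        rw [Nat.cast_sub hm1]; push_cast; ring
      rw [h1, ← intervalIntegral.integral_of_le hz.le,
        intervalIntegral.integral_comp_sub_left (fun x => x ^ (m - 1)) z, sub_self,
        integral_pow, Nat.sub_add_cancel hm1, hcast,
        zero_pow (by omega : m ≠ 0), sub_zero]
    · filter_upwards [ae_restrict_mem measurableSet_Ioo] with a ha
      exact pow_nonneg (by linarith [ha.2]) _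
  -- step e12
  have e12 : ∫⁻ z in Ioi c, ∫⁻ a in Ioo c z, W a z = J / d := by
    rw [hJ, div_eq_mul_inv, ← lintegral_mul_const' d⁻¹ _ hdinv]
    refine setLIntegral_congr_fun_ae measurableSet_Ioi (ae_of_all _ fun z (hz : c < z) => ?_)
    rw [hW]
    rw [lintegral_mul_const (Q z) (show Measurable fun a : ℝ => ENNReal.ofReal ((z - a) ^ (m - 1))
      from ((measurable_const.sub measurable_id).pow_const _).ennreal_ofReal)]
    rw [hcompute z hz, hQ, hd]
    rw [ENNReal.ofReal_div_of_pos mpos,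
      ENNReal.ofReal_mul (pow_nonneg (by linarith : (0:ℝ) ≤ z - c) m), div_eq_mul_inv]
    ring
  -- assemble
  have B1 : J / d ≤ ∫⁻ a in Ioi c, K a := by
    rw [e8, e9]
    calc J / d = ∫⁻ z in Ioi c, ∫⁻ a in Ioo c z, W a z := e12.symm
      _ ≤ ∫⁻ z : ℝ, ∫⁻ a in Ioo c z, W a z := setLIntegral_le_lintegral _ _
      _ = ∫⁻ z : ℝ, ∫⁻ a in Ioi c, (if a < z then W a z else 0) := by
          exact lintegral_congr fun z => (e10 z).symm
  calc 2 * T * (J / d)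
      ≤ 2 * T * ∫⁻ a in Ioi c, K a := by
        exact mul_le_mul_right B1 _
    _ = (∫⁻ a in Iio (-c), T * K |a|) + ∫⁻ a in Ioi c, T * K |a| := by
        rw [e6, eabs, ← two_mul, mul_assoc]
    _ = ∫⁻ a in Iio (-c) ∪ Ioi c, T * K |a| := e5.symm
    _ = ∫⁻ a : ℝ, if c < |a| then T * K |a| else 0 := e4.symm
    _ = ∫⁻ p, H p
        ∂((volume : Measure ℝ).prod (volume : Measure (EuclideanSpace ℝ (Fin m)))) := e3.symm
    _ = ∫⁻ x, H (G x) := e2.symm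
    _ ≤ ∫⁻ x in Aset, Q ‖x‖ := e1

theorem stmt11 (n : ℕ) (hn : 2 ≤ n)
    (φ : ℝ → ℝ)
    (hmono : MonotoneOn φ (Set.Ici 0))
    (hconv : ConvexOn ℝ (Set.Ici 0) φ)
    (hnonneg : ∀ t ∈ Set.Ici (0 : ℝ), 0 ≤ φ t)
    (hnc : ∃ s t : ℝ, 0 ≤ s ∧ 0 ≤ t ∧ φ s ≠ φ t)
    (μ : Measure (EuclideanSpace ℝ (Fin n)))
    (hμ : μ = volume.withDensity fun x => ENNReal.ofReal (Real.exp (-φ ‖x‖)))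
    (R : ℝ) (hR : 0 < R)
    (en : EuclideanSpace ℝ (Fin n))
    (hen : en = EuclideanSpace.single (⟨n - 1, by omega⟩ : Fin n) (1 : ℝ))
    (P : Set (EuclideanSpace ℝ (Fin n)))
    (hP : P = {x | |⟪x, en⟫| ≤ R})
    (S : ℝ)
    (hS : S = ((volume : Measure (EuclideanSpace ℝ (Fin (n - 1)))).toSphere
        (Set.univ : Set (Metric.sphere (0 : EuclideanSpace ℝ (Fin (n - 1))) 1))).toReal)
    (t : ℝ) (ht : 0 < t) :
    ENNReal.ofReal
        ((2 * S / (n - 1)) * ∫ z in Set.Ioi (t * R), (z - t * R) ^ (n - 1) * Real.exp (-φ z))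
      ≤ μ (t • P)ᶜ := by
  obtain ⟨m, rfl⟩ : ∃ m, n = m + 1 := ⟨n - 1, by omega⟩
  have hm1 : 1 ≤ m := by omega
  have mpos : (0:ℝ) < (m:ℝ) := by exact_mod_cast hm1
  simp only [Nat.add_sub_cancel] at hP ⊢
  rw [show ((m + 1 : ℕ) : ℝ) - 1 = (m:ℝ) by push_cast; ring]
  set c := t * R with hc
  have hc0 : 0 < c := mul_pos ht hR
  set ψ : ℝ → ℝ := fun s => φ (max 0 s) with hψ
  have hψmono : Monotone ψ := fun s u hsu =>
    hmono (Set.mem_Ici.2 (le_max_left 0 s)) (Set.mem_Ici.2 (le_max_left 0 u))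
      (max_le_max le_rfl hsu)
  have hψeq : ∀ s : ℝ, 0 ≤ s → ψ s = φ s := fun s hs => by
    rw [hψ]; simp [max_eq_right hs]
  have hen' : en = EuclideanSpace.single (Fin.last m) (1:ℝ) := hen
  have hP' : P = {x : EuclideanSpace ℝ (Fin (m+1)) | |x (Fin.last m)| ≤ R} := by
    rw [hP]; ext x
    simp only [mem_setOf_eq, hen', EuclideanSpace.inner_single_right, one_mul,
      starRingEnd_apply, star_trivial]
  have hPt : t • P = {x : EuclideanSpace ℝ (Fin (m+1)) | |x (Fin.last m)| ≤ c} := by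
    rw [hP']
    ext x
    simp only [Set.mem_smul_set, mem_setOf_eq]
    constructor
    · rintro ⟨y, hy, rfl⟩
      have hxy : (t • y) (Fin.last m) = t * y (Fin.last m) := rfl
      rw [hxy, abs_mul, abs_of_pos ht, hc]
      exact mul_le_mul_of_nonneg_left hy ht.le
    · intro hx
      refine ⟨t⁻¹ • x, ?_, ?_⟩
      · have hxy : (t⁻¹ • x) (Fin.last m) = t⁻¹ * x (Fin.last m) := rfl
        rw [hxy, abs_mul, abs_inv, abs_of_pos ht, inv_mul_le_iff₀ ht]
        rw [hc] at hx
        linarith [hx]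
      · rw [smul_smul, mul_inv_cancel₀ ht.ne', one_smul]
  have hA : (t • P)ᶜ = {x : EuclideanSpace ℝ (Fin (m+1)) | c < |x (Fin.last m)|} := by
    rw [hPt]; ext x; simp only [mem_compl_iff, mem_setOf_eq, not_le]
  have hxm : Measurable fun x : EuclideanSpace ℝ (Fin (m+1)) => x (Fin.last m) :=
    (measurable_pi_apply (Fin.last m)).comp (MeasurableEquiv.toLp 2 (Fin (m+1) → ℝ)).symm.measurable
  have hAmeas : MeasurableSet {x : EuclideanSpace ℝ (Fin (m+1)) | c < |x (Fin.last m)|} :=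
    measurableSet_lt measurable_const hxm.abs
  have hμA : μ (t • P)ᶜ = ∫⁻ x in {x : EuclideanSpace ℝ (Fin (m+1)) | c < |x (Fin.last m)|},
      ENNReal.ofReal (Real.exp (-ψ ‖x‖)) := by
    rw [hμ, hA, withDensity_apply _ hAmeas]
    exact lintegral_congr fun x => by rw [hψeq _ (norm_nonneg x)]
  have hcore := my_core m hm1 ψ hψmono c hc0
  have hJeq : (∫⁻ z in Ioi c, ENNReal.ofReal ((z - c) ^ m * Real.exp (-ψ z)))
      = ∫⁻ z in Ioi c, ENNReal.ofReal ((z - c) ^ m * Real.exp (-φ z)) :=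
    setLIntegral_congr_fun_ae measurableSet_Ioi (ae_of_all _ fun z (hz : c < z) => by
      rw [hψeq z (by linarith)])
  rw [hJeq, ← hμA] at hcore
  by_cases hInt : IntegrableOn (fun z => (z - c) ^ m * Real.exp (-φ z)) (Ioi c) volume
  · refine le_trans ?_ hcore
    have hnn : 0 ≤ᵐ[volume.restrict (Ioi c)] fun z => (z - c) ^ m * Real.exp (-φ z) := by
      filter_upwards [ae_restrict_mem measurableSet_Ioi] with z hz
      exact mul_nonneg (pow_nonneg (by linarith [mem_Ioi.1 hz]) _) (Real.exp_nonneg _)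
    have hofu := ofReal_integral_eq_lintegral_ofReal hInt hnn
    have hS0 : 0 ≤ S := by rw [hS]; exact ENNReal.toReal_nonneg
    rw [ENNReal.ofReal_mul (by positivity : (0:ℝ) ≤ 2 * S / (m:ℝ)), hofu]
    have hcoef : ENNReal.ofReal (2 * S / (m:ℝ))
        = 2 * ((volume : Measure (EuclideanSpace ℝ (Fin m))).toSphere univ)
            / ENNReal.ofReal (m:ℝ) := by
      rw [ENNReal.ofReal_div_of_pos mpos, ENNReal.ofReal_mul (by norm_num : (0:ℝ) ≤ 2), hS,
        ENNReal.ofReal_toReal (measure_ne_top _ _), ENNReal.ofReal_ofNat]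
    rw [hcoef]
    refine le_of_eq ?_
    rw [div_eq_mul_inv, div_eq_mul_inv]
    ring
  · rw [integral_undef hInt]
    simp
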